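/- Let J be a real normal matrix with J² = -I and let A be a complex skew J-Hamiltonian matrix, i.e., (AJ)* = -AJ. Then λ ∈ σ(A) if and only if λ̄ ∈ σ(A). -/

import Mathlib

open Matrix

lemma skew_of_normal (n : ℕ) (J : Matrix (Fin n) (Fin n) ℝ)
    (hnormal : J * Jᵀ = Jᵀ * J) (hJ2 : J * J = -1) : Jᵀ = -J := by
  have hP : (Jᵀ * J).PosSemidef := by
    simpa using posSemidef_conjTranspose_mul_self J
  have hsq : (Jᵀ * J) ^ 2 = (1 : Matrix (Fin n) (Fin n) ℝ) ^ 2 := by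
    have h1 : (Jᵀ * J) ^ 2 = Jᵀ * (J * Jᵀ) * J := by
      rw [pow_two]; noncomm_ring
    rw [h1, hnormal, show Jᵀ * (Jᵀ * J) * J = (J * J)ᵀ * (J * J) by
      rw [transpose_mul]; noncomm_ring, hJ2]
    simp
  have hP1 : Jᵀ * J = 1 := by
    open scoped MatrixOrder in
    exact (CFC.sq_eq_sq_iff (Jᵀ * J) 1 hP.nonneg zero_le_one).mp hsq
  have h2 : Jᵀ * (J * J) = J := by rw [← mul_assoc, hP1, one_mul]
  rw [hJ2, Matrix.mul_neg, mul_one] at h2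
  linear_combination (norm := noncomm_ring) -h2

theorem stmt_4 (n : ℕ) (J : Matrix (Fin n) (Fin n) ℝ)
    (hnormal : J * Jᵀ = Jᵀ * J) (hJ2 : J * J = -1)
    (A : Matrix (Fin n) (Fin n) ℂ)
    (hSkewHam : (A * J.map (Complex.ofReal))ᴴ = -(A * J.map (Complex.ofReal))) :
    ∀ lam : ℂ, lam ∈ spectrum ℂ A ↔ (starRingEnd ℂ lam) ∈ spectrum ℂ A := by
  set Jc : Matrix (Fin n) (Fin n) ℂ := J.map (Complex.ofReal) with hJc
  have hskew : J.transpose = -J := skew_of_normal n J hnormal hJ2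
  have hJcT : Jcᴴ = -Jc := by
    ext i j
    have := congrFun (congrFun hskew i) j
    simp only [transpose_apply, neg_apply] at this
    simp [hJc, conjTranspose_apply, this]
  have hJc2 : Jc * Jc = -1 := by
    have h : (J.map ⇑Complex.ofRealHom) * (J.map ⇑Complex.ofRealHom) = -1 := by
      rw [← Matrix.map_mul, hJ2]
      ext i j
      simp [Matrix.map_apply, Matrix.one_apply, apply_ite]
    exact h
  have hunit : (-Jc) * Jc = 1 := by rw [neg_mul, hJc2]; simp
  have hunit' : Jc * (-Jc) = 1 := by rw [mul_neg, hJc2]; simp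
  -- from hSkewHam
  have key : (-Jc) * A * Jc = Aᴴ := by
    have h1 : (-Jc) * Aᴴ = -(A * Jc) := by
      have := hSkewHam
      rwa [conjTranspose_mul, hJcT] at this
    have h2 : Jc * Aᴴ = A * Jc := by
      have := congrArg Neg.neg h1
      simpa using this
    calc (-Jc) * A * Jc = -(Jc * (A * Jc)) := by noncomm_ring
      _ = -(Jc * (Jc * Aᴴ)) := by rw [h2]
      _ = -((Jc * Jc) * Aᴴ) := by noncomm_ring
      _ = Aᴴ := by rw [hJc2]; simp
  -- determinant identity
  have hdet : ∀ μ : ℂ, (A - μ • 1).det = star ((A - (star μ) • 1).det) := by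
    intro μ
    have h1 : (A - (star μ) • 1)ᴴ = Aᴴ - μ • 1 := by
      simp [conjTranspose_smul]
    have h2 : Aᴴ - μ • 1 = (-Jc) * (A - μ • 1) * Jc := by
      rw [← key]
      have hsc : (-Jc) * (μ • (1 : Matrix (Fin n) (Fin n) ℂ)) * Jc = μ • 1 := by
        rw [show (-Jc) * (μ • (1 : Matrix (Fin n) (Fin n) ℂ)) * Jc = μ • ((-Jc) * Jc) by
          simp [Matrix.mul_smul, Matrix.smul_mul], hunit]
      rw [Matrix.mul_sub, Matrix.sub_mul, hsc]
    have h3 : ((-Jc) * (A - μ • 1) * Jc).det = (A - μ • 1).det := by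
      rw [det_mul, det_mul, mul_comm, ← mul_assoc, ← det_mul, hunit']
      simp
    calc (A - μ • 1).det = ((A - (star μ) • 1)ᴴ).det := by rw [h1, h2, h3]
      _ = star ((A - (star μ) • 1).det) := det_conjTranspose _
  have hmem : ∀ μ : ℂ, μ ∈ spectrum ℂ A ↔ (A - μ • 1).det = 0 := by
    intro μ
    rw [spectrum.mem_iff, Matrix.isUnit_iff_isUnit_det, isUnit_iff_ne_zero, not_ne_iff]
    have halg : (algebraMap ℂ (Matrix (Fin n) (Fin n) ℂ)) μ - A
        = (-1 : ℂ) • (A - μ • 1) := by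
      rw [Algebra.algebraMap_eq_smul_one]
      ext i j; simp
    rw [halg, det_smul, mul_eq_zero]
    have hne : ((-1 : ℂ)) ^ Fintype.card (Fin n) ≠ 0 := by
      apply pow_ne_zero; norm_num
    tauto
  intro lam
  rw [hmem, hmem, hdet lam]
  rw [show (starRingEnd ℂ) lam = star lam from rfl]
  exact star_eq_zero
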